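/- Let G be a finite group and A an abelian subgroup of G. Then there exists a characteristic abelian subgroup N of G such that [G : N] ≤ [G : A]². -/

import Mathlib

open Subgroup

namespace ChermakDelgadoAux

variable {G : Type*} [Group G] [Finite G]

/-- The Chermak–Delgado measure. -/
noncomputable def cdm (H : Subgroup G) : ℕ :=
  Nat.card H * Nat.card (centralizer (H : Set G))

lemma card_mul_relindex {H K : Subgroup G} (h : H ≤ K) :
    Nat.card H * H.relIndex K = Nat.card K := by
  rw [← Nat.card_congr (subgroupOfEquivOfLe h).toEquiv]
  exact Subgroup.card_mul_index (H.subgroupOf K)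

lemma card_inf_sup (H K : Subgroup G) :
    Nat.card H * Nat.card K ≤
      Nat.card (H ⊓ K : Subgroup G) * Nat.card (H ⊔ K : Subgroup G) := by
  have h1 : Nat.card (H ⊓ K : Subgroup G) * (H ⊓ K).relIndex H = Nat.card H :=
    card_mul_relindex inf_le_left
  have h2 : Nat.card K * K.relIndex (H ⊔ K) = Nat.card (H ⊔ K : Subgroup G) :=
    card_mul_relindex le_sup_right
  have h3 : (H ⊓ K).relIndex H = K.relIndex H := inf_relIndex_left H K
  have hne : K.relIndex (H ⊔ K) ≠ 0 := by
    have : (K.subgroupOf (H ⊔ K)).index ≠ 0 := Subgroup.index_ne_zero_of_finite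
    exact this
  have h4 : K.relIndex H ≤ K.relIndex (H ⊔ K) :=
    relIndex_le_of_le_right le_sup_left hne
  calc Nat.card H * Nat.card K
      = Nat.card (H ⊓ K : Subgroup G) * K.relIndex H * Nat.card K := by rw [← h3, h1]
    _ ≤ Nat.card (H ⊓ K : Subgroup G) * K.relIndex (H ⊔ K) * Nat.card K := by
        exact Nat.mul_le_mul_right _ (Nat.mul_le_mul_left _ h4)
    _ = Nat.card (H ⊓ K : Subgroup G) * (Nat.card K * K.relIndex (H ⊔ K)) := by ring
    _ = Nat.card (H ⊓ K : Subgroup G) * Nat.card (H ⊔ K : Subgroup G) := by rw [h2]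

lemma centralizer_sup (H K : Subgroup G) :
    centralizer ((H ⊔ K : Subgroup G) : Set G) =
      centralizer (H : Set G) ⊓ centralizer (K : Set G) := by
  apply le_antisymm
  · exact le_inf (centralizer_le (SetLike.coe_subset_coe.2 le_sup_left))
      (centralizer_le (SetLike.coe_subset_coe.2 le_sup_right))
  · rw [le_centralizer_iff]
    exact sup_le (le_centralizer_iff.mpr inf_le_left) (le_centralizer_iff.mpr inf_le_right)

lemma sup_centralizer_le (H K : Subgroup G) :
    centralizer (H : Set G) ⊔ centralizer (K : Set G) ≤
      centralizer ((H ⊓ K : Subgroup G) : Set G) :=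
  sup_le (centralizer_le (SetLike.coe_subset_coe.2 inf_le_left))
    (centralizer_le (SetLike.coe_subset_coe.2 inf_le_right))

/-- Submultiplicativity of the Chermak–Delgado measure. -/
lemma cdm_mul_le (H K : Subgroup G) :
    cdm H * cdm K ≤ cdm (H ⊓ K) * cdm (H ⊔ K) := by
  unfold cdm
  have c1 := card_inf_sup H K
  have c2 := card_inf_sup (centralizer (H : Set G)) (centralizer (K : Set G))
  rw [← centralizer_sup H K] at c2
  have c3 : Nat.card (centralizer (H : Set G) ⊔ centralizer (K : Set G) : Subgroup G) ≤
      Nat.card (centralizer ((H ⊓ K : Subgroup G) : Set G)) :=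
    Subgroup.card_le_of_le (sup_centralizer_le H K)
  calc Nat.card H * Nat.card (centralizer (H : Set G)) *
        (Nat.card K * Nat.card (centralizer (K : Set G)))
      = (Nat.card H * Nat.card K) *
        (Nat.card (centralizer (H : Set G)) * Nat.card (centralizer (K : Set G))) := by ring
    _ ≤ (Nat.card (H ⊓ K : Subgroup G) * Nat.card (H ⊔ K : Subgroup G)) *
        (Nat.card (centralizer ((H ⊔ K : Subgroup G) : Set G)) *
          Nat.card (centralizer (H : Set G) ⊔ centralizer (K : Set G) : Subgroup G)) :=
        Nat.mul_le_mul c1 c2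
    _ ≤ (Nat.card (H ⊓ K : Subgroup G) * Nat.card (H ⊔ K : Subgroup G)) *
        (Nat.card (centralizer ((H ⊔ K : Subgroup G) : Set G)) *
          Nat.card (centralizer ((H ⊓ K : Subgroup G) : Set G))) := by
        exact Nat.mul_le_mul_left _ (Nat.mul_le_mul_left _ c3)
    _ = Nat.card (H ⊓ K : Subgroup G) * Nat.card (centralizer ((H ⊓ K : Subgroup G) : Set G)) *
        (Nat.card (H ⊔ K : Subgroup G) *
          Nat.card (centralizer ((H ⊔ K : Subgroup G) : Set G))) := by ring

lemma le_centralizer_centralizer' (H : Subgroup G) :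
    H ≤ centralizer ((centralizer (H : Set G) : Subgroup G) : Set G) :=
  le_centralizer_iff.mpr le_rfl

lemma card_le_G (H : Subgroup G) : Nat.card H ≤ Nat.card G :=
  Nat.card_le_card_of_injective _ Subtype.coe_injective

lemma cdm_pos (H : Subgroup G) : 0 < cdm H :=
  Nat.mul_pos Nat.card_pos Nat.card_pos

lemma cdm_centralizer_ge (H : Subgroup G) : cdm H ≤ cdm (centralizer (H : Set G)) := by
  unfold cdm
  rw [Nat.mul_comm (Nat.card H)]
  exact Nat.mul_le_mul_left _ (Subgroup.card_le_of_le (le_centralizer_centralizer' H))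

lemma centralizer_map (φ : G ≃* G) (H : Subgroup G) :
    centralizer ((H.map φ.toMonoidHom : Subgroup G) : Set G) =
      (centralizer (H : Set G)).map φ.toMonoidHom := by
  ext x
  simp only [Subgroup.mem_map, mem_centralizer_iff]
  constructor
  · intro h
    refine ⟨φ.symm x, fun g hg => ?_, by simp⟩
    have h2 := h (φ g) ⟨g, hg, rfl⟩
    apply φ.injective
    simpa [map_mul] using h2
  · rintro ⟨y, hy, rfl⟩ g hg
    rcases (Subgroup.mem_map).1 (SetLike.mem_coe.1 hg) with ⟨k, hk, rfl⟩
    have := hy k hk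
    simp only [MulEquiv.coe_toMonoidHom, ← map_mul]
    rw [this]

lemma cdm_map (φ : G ≃* G) (H : Subgroup G) : cdm (H.map φ.toMonoidHom) = cdm H := by
  unfold cdm
  rw [centralizer_map]
  rw [← Nat.card_congr (Subgroup.equivMapOfInjective H φ.toMonoidHom φ.injective).toEquiv,
    ← Nat.card_congr (Subgroup.equivMapOfInjective (centralizer (H : Set G)) φ.toMonoidHom φ.injective).toEquiv]

end ChermakDelgadoAux

open ChermakDelgadoAux in
/-- A finite group with an abelian subgroup of index k has a
characteristic abelian subgroup of index at most k². -/
theorem exists_characteristic_abelian_of_abelian {G : Type*} [Group G] [Finite G]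
    (A : Subgroup G) (hA : IsMulCommutative A) :
    ∃ N : Subgroup G, N.Characteristic ∧ IsMulCommutative N ∧ N.index ≤ A.index ^ 2 := by
  classical
  -- the set of subgroups of maximal Chermak–Delgado measure
  obtain ⟨M₀, hM₀⟩ := Finite.exists_max (cdm (G := G))
  set S : Set (Subgroup G) := {H | ∀ K : Subgroup G, cdm K ≤ cdm H} with hS
  have hM₀S : M₀ ∈ S := hM₀
  -- centralizers of members of S are in S
  have hcent : ∀ H ∈ S, centralizer (H : Set G) ∈ S := by
    intro H hH K
    exact (hH K).trans (cdm_centralizer_ge H)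
  -- S is closed under intersections
  have hinf : ∀ H ∈ S, ∀ K ∈ S, H ⊓ K ∈ S := by
    intro H hH K hK L
    have h1 : cdm H * cdm K ≤ cdm (H ⊓ K) * cdm (H ⊔ K) := cdm_mul_le H K
    have h2 : cdm (H ⊔ K) ≤ cdm K := hK _
    have h3 : cdm H * cdm K ≤ cdm (H ⊓ K) * cdm K :=
      h1.trans (Nat.mul_le_mul_left _ h2)
    have h4 : cdm H ≤ cdm (H ⊓ K) := Nat.le_of_mul_le_mul_right h3 (cdm_pos K)
    exact (hH L).trans h4
  -- a member of S of minimal cardinality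
  obtain ⟨N, hNS, hNmin⟩ : ∃ N ∈ S, ∀ K ∈ S, Nat.card N ≤ Nat.card K := by
    obtain ⟨N, hN⟩ := Finite.exists_max
      (fun H : Subgroup G => if H ∈ S then (Nat.card G + 1 - Nat.card H) else 0)
    have hNS : N ∈ S := by
      by_contra hc
      have := hN M₀
      rw [if_pos hM₀S, if_neg hc] at this
      have hle : Nat.card M₀ ≤ Nat.card G := card_le_G M₀
      omega
    refine ⟨N, hNS, fun K hK => ?_⟩
    have := hN K
    rw [if_pos hK, if_pos hNS] at this
    have h1 : Nat.card N ≤ Nat.card G := card_le_G N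
    have h2 : Nat.card K ≤ Nat.card G := card_le_G K
    omega
  -- N is the least element of S
  have hNle : ∀ K ∈ S, N ≤ K := by
    intro K hK
    have hmem : N ⊓ K ∈ S := hinf N hNS K hK
    have hcard : Nat.card N ≤ Nat.card (N ⊓ K : Subgroup G) := hNmin _ hmem
    have hle : (N ⊓ K : Subgroup G) ≤ N := inf_le_left
    have : N ⊓ K = N := by
      exact Subgroup.eq_of_le_of_card_ge hle hcard
    rw [← this]
    exact inf_le_right
  -- N is abelian
  have hNab : IsMulCommutative N :=
    le_centralizer_iff_isMulCommutative.mp (hNle _ (hcent N hNS))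
  -- N is characteristic
  have hNchar : N.Characteristic := by
    rw [Subgroup.characteristic_iff_map_eq]
    intro φ
    have hmapS : ∀ ψ : G ≃* G, N.map ψ.toMonoidHom ∈ S := by
      intro ψ K
      have h := hNS (K.map ψ.symm.toMonoidHom)
      rw [cdm_map] at h
      rw [cdm_map]
      exact h
    have h1 : N ≤ N.map φ.toMonoidHom := hNle _ (hmapS φ)
    have h2 : N ≤ N.map φ.symm.toMonoidHom := hNle _ (hmapS φ.symm)
    have h3 : N.map φ.toMonoidHom ≤ N := by
      intro x hx
      rcases Subgroup.mem_map.1 hx with ⟨y, hy, rfl⟩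
      have := h2 hy
      rcases Subgroup.mem_map.1 this with ⟨z, hz, hzy⟩
      have : φ y = z := by
        have : φ.symm z = y := hzy
        rw [← this]; simp
      rw [MulEquiv.coe_toMonoidHom, this]
      exact hz
    exact le_antisymm h3 h1
  refine ⟨N, hNchar, hNab, ?_⟩
  -- index bound
  have hAC : (A : Subgroup G) ≤ centralizer (A : Set G) := Subgroup.le_centralizer (h := hA) A
  have hAm : Nat.card A * Nat.card A ≤ cdm A :=
    Nat.mul_le_mul_left _ (Subgroup.card_le_of_le hAC)
  have hNm : cdm A ≤ cdm N := hNS A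
  have hCG : Nat.card (centralizer (N : Set G)) ≤ Nat.card G :=
    card_le_G _
  have hNcard : Nat.card N * N.index = Nat.card G := Subgroup.card_mul_index N
  have hAcard : Nat.card A * A.index = Nat.card G := Subgroup.card_mul_index A
  have key : N.index * (Nat.card A * Nat.card A) ≤ A.index ^ 2 * (Nat.card A * Nat.card A) := by
    calc N.index * (Nat.card A * Nat.card A)
        ≤ N.index * cdm N := Nat.mul_le_mul_left _ (hAm.trans hNm)
      _ = N.index * Nat.card N * Nat.card (centralizer (N : Set G)) := by unfold cdm; ring
      _ ≤ N.index * Nat.card N * Nat.card G :=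
          Nat.mul_le_mul_left _ hCG
      _ = Nat.card G * Nat.card G := by rw [Nat.mul_comm N.index, hNcard]
      _ = (Nat.card A * A.index) * (Nat.card A * A.index) := by rw [hAcard]
      _ = A.index ^ 2 * (Nat.card A * Nat.card A) := by ring
  exact Nat.le_of_mul_le_mul_right
    (by rwa [Nat.mul_comm N.index, Nat.mul_comm (A.index ^ 2)] at key)
    (Nat.mul_pos Nat.card_pos Nat.card_pos)
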